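/- (Pointwise form of the optimal discriminator.) For all real numbers a > 0 and b > 0 and for every t in the open interval (0, 1), a·log t + b·log(1 − t) ≤ a·log(a/(a + b)) + b·log(b/(a + b)), with equality if and only if t = a/(a + b). In particular, the function t ↦ a·log t + b·log(1 − t) on (0, 1) has the unique maximizer t = a/(a + b). -/

import Mathlib

open Real

/-- (Pointwise form of the optimal discriminator.) For `a, b > 0` and
`t ∈ (0,1)`, `a·log t + b·log (1-t) ≤ a·log (a/(a+b)) + b·log (b/(a+b))`,
with equality iff `t = a/(a+b)`. -/
theorem pointwise_optimal_discriminator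
    (a b : ℝ) (ha : 0 < a) (hb : 0 < b) (t : ℝ) (ht0 : 0 < t) (ht1 : t < 1) :
    a * Real.log t + b * Real.log (1 - t) ≤
      a * Real.log (a / (a + b)) + b * Real.log (b / (a + b)) ∧
    (a * Real.log t + b * Real.log (1 - t) =
        a * Real.log (a / (a + b)) + b * Real.log (b / (a + b)) ↔
      t = a / (a + b)) := by
  have hab : 0 < a + b := by linarith
  set s : ℝ := a / (a + b) with hs
  have hs0 : 0 < s := div_pos ha hab
  have hs1 : s < 1 := (div_lt_one hab).2 (by linarith)
  have h1s : 1 - s = b / (a + b) := by rw [hs]; field_simp; ring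
  have key : t ≠ s → a * Real.log t + b * Real.log (1 - t) <
      a * Real.log s + b * Real.log (1 - s) := by
    intro hts
    have h1 : Real.log t - Real.log s = Real.log (t / s) :=
      (Real.log_div (ne_of_gt ht0) (ne_of_gt hs0)).symm
    have h2 : Real.log (1 - t) - Real.log (1 - s) = Real.log ((1 - t) / (1 - s)) :=
      (Real.log_div (by linarith) (by linarith)).symm
    have hne : t / s ≠ 1 := by
      intro h
      apply hts
      field_simp at h
      exact h
    have hlt : Real.log (t / s) < t / s - 1 :=
      Real.log_lt_sub_one_of_pos (div_pos ht0 hs0) hne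
    have hle : Real.log ((1 - t) / (1 - s)) ≤ (1 - t) / (1 - s) - 1 :=
      Real.log_le_sub_one_of_pos (div_pos (by linarith) (by linarith))
    have e1 : a * (t / s) = (a + b) * t := by
      rw [hs]; field_simp
    have e2 : b * ((1 - t) / (1 - s)) = (a + b) * (1 - t) := by
      rw [h1s]; field_simp
    have hA : a * Real.log (t / s) < a * (t / s - 1) :=
      mul_lt_mul_of_pos_left hlt ha
    have hB : b * Real.log ((1 - t) / (1 - s)) ≤ b * ((1 - t) / (1 - s) - 1) :=
      mul_le_mul_of_nonneg_left hle hb.le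
    rw [← h1] at hA
    rw [← h2] at hB
    nlinarith [hA, hB, e1, e2]
  constructor
  · by_cases h : t = s
    · rw [h, ← h1s]
    · rw [← h1s]
      exact (key h).le
  · constructor
    · intro heq
      by_contra h
      have := key h
      rw [← h1s] at heq
      linarith
    · intro h
      rw [h, ← h1s]
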